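/- There exists a constant M₁ > 0 such that for every μ > 0, every measurable set E ⊆ (0,1), and every continuously differentiable function θ : [0,1] → ℝ with 0 ≤ θ(x) ≤ 2 for all x, setting m = 𝟙_E, one has ∫₀¹ |θ − m| ≤ M₁ · ( (μ/2)∫₀¹ θ′² − (1/2)∫₀¹ m θ² + (1/3)∫₀¹ θ³ + (1/6)∫₀¹ m³ )^{1/3}. In particular the quantity inside the cube root is nonnegative. -/

import Mathlib

open MeasureTheory intervalIntegral

/-- Auxiliary: a measurable function bounded on `Ioc 0 1` is interval
integrable on `[0,1]`. -/
lemma intervalIntegrable_of_bdd {f : ℝ → ℝ} (hf : Measurable f) (C : ℝ)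
    (h : ∀ x ∈ Set.Ioc (0:ℝ) 1, |f x| ≤ C) :
    IntervalIntegrable f volume 0 1 := by
  rw [intervalIntegrable_iff_integrableOn_Ioc_of_le zero_le_one]
  apply Measure.integrableOn_of_bounded (M := C) (by simp [measure_Ioc_lt_top.ne]) hf.aestronglyMeasurable
  filter_upwards [ae_restrict_mem measurableSet_Ioc] with x hx
  simpa using h x hx

/-- One-dimensional, classical-regularity version of Lemma 3 (Le:L1): for
bang-bang `m = 𝟙_E` on `(0,1)`, the `L¹` distance from `θ` to `m` is bounded
by a universal constant times the cube root of the shifted energy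
`Ẽ_{m,μ}(θ)`, which is in particular nonnegative. -/
theorem L1_cube_root_energy_bound_1D :
    ∃ M₁ > (0:ℝ),
      ∀ (μ : ℝ), 0 < μ →
      ∀ (E : Set ℝ), MeasurableSet E → E ⊆ Set.Ioo (0:ℝ) 1 →
      ∀ (θ : ℝ → ℝ), ContDiff ℝ 1 θ →
        (∀ x ∈ Set.Icc (0:ℝ) 1, 0 ≤ θ x ∧ θ x ≤ 2) →
        (0 ≤ μ / 2 * (∫ x in (0:ℝ)..1, (deriv θ x) ^ 2)
            - (1/2) * (∫ x in (0:ℝ)..1, E.indicator (fun _ => (1:ℝ)) x * θ x ^ 2)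
            + (1/3) * (∫ x in (0:ℝ)..1, θ x ^ 3)
            + (1/6) * (∫ x in (0:ℝ)..1, E.indicator (fun _ => (1:ℝ)) x ^ 3)) ∧
        (∫ x in (0:ℝ)..1, |θ x - E.indicator (fun _ => (1:ℝ)) x|) ≤
          M₁ * (μ / 2 * (∫ x in (0:ℝ)..1, (deriv θ x) ^ 2)
            - (1/2) * (∫ x in (0:ℝ)..1, E.indicator (fun _ => (1:ℝ)) x * θ x ^ 2)
            + (1/3) * (∫ x in (0:ℝ)..1, θ x ^ 3)
            + (1/6) * (∫ x in (0:ℝ)..1, E.indicator (fun _ => (1:ℝ)) x ^ 3)) ^ ((1:ℝ)/3) := by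
  refine ⟨4, by norm_num, ?_⟩
  intro μ hμ E hE hE1 θ hθ hθbd
  set m : ℝ → ℝ := E.indicator (fun _ => (1:ℝ)) with hmdef
  have hθc : Continuous θ := hθ.continuous
  have hθ'c : Continuous (deriv θ) := hθ.continuous_deriv le_rfl
  have hmE : Measurable m := measurable_const.indicator hE
  have hm01 : ∀ x, m x = 0 ∨ m x = 1 := by
    intro x
    by_cases hx : x ∈ E
    · right; simp [hmdef, Set.indicator_of_mem hx]
    · left; simp [hmdef, Set.indicator_of_notMem hx]
  have hθIoc : ∀ x ∈ Set.Ioc (0:ℝ) 1, 0 ≤ θ x ∧ θ x ≤ 2 := fun x hx =>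
    hθbd x ⟨hx.1.le, hx.2⟩
  -- integrability facts
  have iB : IntervalIntegrable (fun x => m x * θ x ^ 2) volume 0 1 := by
    apply intervalIntegrable_of_bdd (hmE.mul (hθc.measurable.pow_const 2)) 4
    intro x hx
    show |m x * θ x ^ 2| ≤ 4
    obtain ⟨h0, h2⟩ := hθIoc x hx
    rcases hm01 x with h | h <;> rw [h] <;> rw [abs_mul, abs_pow] <;> simp <;> nlinarith [abs_of_nonneg h0]
  have iC : IntervalIntegrable (fun x => θ x ^ 3) volume 0 1 :=
    (hθc.pow 3).intervalIntegrable 0 1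
  have iD : IntervalIntegrable (fun x => m x ^ 3) volume 0 1 := by
    apply intervalIntegrable_of_bdd (hmE.pow_const 3) 1
    intro x _
    rcases hm01 x with h | h <;> rw [h] <;> norm_num
  have ifabs : IntervalIntegrable (fun x => |θ x - m x|) volume 0 1 := by
    apply intervalIntegrable_of_bdd (hθc.measurable.sub hmE).abs 3
    intro x hx
    show |(|θ x - m x|)| ≤ 3
    obtain ⟨h0, h2⟩ := hθIoc x hx
    rcases hm01 x with h | h <;> rw [abs_abs, abs_le] <;> constructor <;> rw [h] <;> linarith
  have iI : IntervalIntegrable (fun x => |θ x - m x| ^ 3) volume 0 1 := by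
    apply intervalIntegrable_of_bdd ((hθc.measurable.sub hmE).abs.pow_const 3) 27
    intro x hx
    obtain ⟨h0, h2⟩ := hθIoc x hx
    have h3 : |θ x - m x| ≤ 3 := by
      rcases hm01 x with h | h <;> rw [abs_le] <;> constructor <;> rw [h] <;> linarith
    calc |(|θ x - m x| ^ 3)| = |θ x - m x| ^ 3 := by
            rw [abs_of_nonneg (by positivity)]
      _ ≤ 3 ^ 3 := by
            exact pow_le_pow_left₀ (abs_nonneg _) h3 3
      _ = 27 := by norm_num
  -- notation for the integrals
  set A := ∫ x in (0:ℝ)..1, (deriv θ x) ^ 2 with hA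
  set B := ∫ x in (0:ℝ)..1, m x * θ x ^ 2 with hB
  set C := ∫ x in (0:ℝ)..1, θ x ^ 3 with hC
  set D := ∫ x in (0:ℝ)..1, m x ^ 3 with hD
  set I := ∫ x in (0:ℝ)..1, |θ x - m x| ^ 3 with hI
  set Q := μ / 2 * A - (1/2) * B + (1/3) * C + (1/6) * D with hQ
  have hAnn : 0 ≤ A :=
    intervalIntegral.integral_nonneg zero_le_one (fun x _ => sq_nonneg _)
  have hInn : 0 ≤ I :=
    intervalIntegral.integral_nonneg zero_le_one (fun x _ => by positivity)
  -- pointwise energy inequality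
  have hpt : ∀ x ∈ Set.Icc (0:ℝ) 1,
      |θ x - m x| ^ 3 ≤ -3 * (m x * θ x ^ 2) + 2 * θ x ^ 3 + m x ^ 3 := by
    intro x hx
    obtain ⟨h0, h2⟩ := hθbd x hx
    rcases hm01 x with h | h <;> rw [h]
    · rw [sub_zero, abs_of_nonneg h0]; nlinarith
    · have hb0 : 0 ≤ |θ x - 1| := abs_nonneg _
      have hb1 : |θ x - 1| ≤ 1 := by rw [abs_le]; constructor <;> linarith
      have hb2 : |θ x - 1| ^ 2 = (θ x - 1) ^ 2 := sq_abs _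
      nlinarith [mul_le_mul_of_nonneg_right hb1 (sq_nonneg |θ x - 1|),
        mul_nonneg h0 (sq_nonneg (θ x - 1))]
  have h1 : I ≤ ∫ x in (0:ℝ)..1, (-3 * (m x * θ x ^ 2) + 2 * θ x ^ 3 + m x ^ 3) := by
    apply intervalIntegral.integral_mono_on zero_le_one iI
      (((iB.const_mul (-3)).add (iC.const_mul 2)).add iD) hpt
  have h2 : (∫ x in (0:ℝ)..1, (-3 * (m x * θ x ^ 2) + 2 * θ x ^ 3 + m x ^ 3))
      = -3 * B + 2 * C + D := by
    rw [intervalIntegral.integral_add ((iB.const_mul (-3)).add (iC.const_mul 2)) iD,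
      intervalIntegral.integral_add (iB.const_mul (-3)) (iC.const_mul 2),
      intervalIntegral.integral_const_mul, intervalIntegral.integral_const_mul]
  have hI6Q : I ≤ 6 * Q := by
    rw [h2] at h1
    have : 0 ≤ μ / 2 * A := by positivity
    rw [hQ]; linarith
  have hQnn : 0 ≤ Q := by linarith
  refine ⟨hQnn, ?_⟩
  -- the key estimate: for every t > 0, ∫|θ - m| ≤ t + I / t²
  have key : ∀ t : ℝ, 0 < t →
      (∫ x in (0:ℝ)..1, |θ x - m x|) ≤ t + I / t ^ 2 := by
    intro t ht
    have step : (∫ x in (0:ℝ)..1, |θ x - m x|)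
        ≤ ∫ x in (0:ℝ)..1, (t + |θ x - m x| ^ 3 / t ^ 2) := by
      apply intervalIntegral.integral_mono_on zero_le_one ifabs
        ((intervalIntegrable_const (c := t)).add (iI.div_const _))
      intro x _
      set a := |θ x - m x| with ha
      have ha0 : 0 ≤ a := abs_nonneg _
      have h3 : (a - t) * t ^ 2 ≤ a ^ 3 := by
        nlinarith [mul_nonneg (add_nonneg ha0 ht.le) (sq_nonneg (a - t)),
          mul_nonneg (sq_nonneg a) ht.le]
      have h4 : a - t ≤ a ^ 3 / t ^ 2 := by
        rw [le_div_iff₀ (by positivity)]; exact h3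
      linarith
    rw [intervalIntegral.integral_add (intervalIntegrable_const (c := t)) (iI.div_const _),
      intervalIntegral.integral_div, intervalIntegral.integral_const] at step
    simpa using step
  rcases hQnn.lt_or_eq with hQpos | hQ0
  · -- positive energy: take t = (6Q)^(1/3)
    set t := (6 * Q) ^ ((1:ℝ)/3) with htdef
    have ht : 0 < t := Real.rpow_pos_of_pos (by linarith) _
    have hcube : t ^ (3:ℕ) = 6 * Q := by
      rw [htdef, ← Real.rpow_natCast ((6*Q) ^ ((1:ℝ)/3)) 3,
        ← Real.rpow_mul (by linarith : (0:ℝ) ≤ 6 * Q)]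
      norm_num
    have hdiv : I / t ^ 2 ≤ t := by
      rw [div_le_iff₀ (by positivity)]
      calc I ≤ 6 * Q := hI6Q
        _ = t ^ 3 := hcube.symm
        _ = t * t ^ 2 := by ring
    have hts : t ≤ 2 * Q ^ ((1:ℝ)/3) := by
      have hmul : t = 6 ^ ((1:ℝ)/3) * Q ^ ((1:ℝ)/3) := by
        rw [htdef, Real.mul_rpow (by norm_num) hQpos.le]
      have h8 : ((8:ℝ)) ^ ((1:ℝ)/3) = 2 := by
        rw [show (8:ℝ) = 2 ^ (3:ℕ) by norm_num, ← Real.rpow_natCast 2 3,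
          ← Real.rpow_mul (by norm_num)]
        norm_num
      have h6 : (6:ℝ) ^ ((1:ℝ)/3) ≤ 2 := by
        rw [← h8]
        exact Real.rpow_le_rpow (by norm_num) (by norm_num) (by norm_num)
      have hQ3 : 0 ≤ Q ^ ((1:ℝ)/3) := Real.rpow_nonneg hQnn _
      rw [hmul]
      exact mul_le_mul_of_nonneg_right h6 hQ3
    calc (∫ x in (0:ℝ)..1, |θ x - m x|) ≤ t + I / t ^ 2 := key t ht
      _ ≤ t + t := by linarith
      _ = 2 * t := by ring
      _ ≤ 2 * (2 * Q ^ ((1:ℝ)/3)) := by linarith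
      _ = 4 * Q ^ ((1:ℝ)/3) := by ring
  · -- zero energy
    have hIz : I = 0 := le_antisymm (by linarith) hInn
    have hle : (∫ x in (0:ℝ)..1, |θ x - m x|) ≤ 0 := by
      apply le_of_forall_pos_le_add
      intro ε hε
      have := key ε hε
      rw [hIz] at this
      simpa using this
    have : (0:ℝ) ≤ 4 * Q ^ ((1:ℝ)/3) := by positivity
    linarith
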